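/- Let P^⊥ be the linear cellular automaton shift determined by Φ. Let n_1, …, n_k ∈ ℤ^d be pairwise distinct elements all having last coordinate equal to 0, let S ⊂ ℤ^d be a finite set, and let C_1, …, C_k : S → 𝔽_p be configurations each occurring in P^⊥ (i.e., for each i there exists y ∈ P^⊥ with y(s) = C_i(s) for all s ∈ S). Then there exist x ∈ P^⊥ and m ∈ ℕ such that x(p^m·n_i + s) = C_i(s) for all 1 ≤ i ≤ k and all s ∈ S. -/

import Mathlib

open MeasureTheory Filter Topology

namespace LCA

/-- The full shift `𝔽_p^{ℤ^d}`. -/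
abbrev Full (p d : ℕ) : Type := (Fin d → ℤ) → ZMod p

/-- The shift action: `(σ_g x)(n) = x(n+g)`. -/
def shift (p d : ℕ) (g : Fin d → ℤ) (x : Full p d) : Full p d := fun n => x (n + g)

/-- `e_d = (0,…,0,1)`, the exponent of the "time" variable `X_d`. -/
def eLast (d : ℕ) : Fin d → ℤ := fun i => if (i : ℕ) = d - 1 then 1 else 0

/-- The linear cellular automaton shift `P^⊥` for `P = X_d − Φ`, as a set:
all `x` with `x(n+e_d) = Σ_{m ∈ S(Φ)} Φ(m)·x(n+m)` for every `n`. -/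
def Pperp (p d : ℕ) (Φ : (Fin d → ℤ) →₀ ZMod p) : Set (Full p d) :=
  {x | ∀ n : Fin d → ℤ, x (n + eLast d) = ∑ m ∈ Φ.support, Φ m * x (n + m)}

/-- `P^⊥` as a closed, shift-invariant subgroup of the full shift. -/
def PperpGroup (p d : ℕ) (Φ : (Fin d → ℤ) →₀ ZMod p) : AddSubgroup (Full p d) where
  carrier := Pperp p d Φ
  zero_mem' := by intro n; simp
  add_mem' := by
    intro x y hx hy n
    simp only [Pi.add_apply, hx n, hy n, mul_add, Finset.sum_add_distrib]
  neg_mem' := by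
    intro x hx n
    simp only [Pi.neg_apply, hx n, mul_neg, Finset.sum_neg_distrib, neg_inj]

lemma shift_mem_Pperp (p d : ℕ) (Φ : (Fin d → ℤ) →₀ ZMod p) (g : Fin d → ℤ)
    {x : Full p d} (hx : x ∈ Pperp p d Φ) : shift p d g x ∈ Pperp p d Φ := by
  intro n
  simpa [shift, add_right_comm] using hx (n + g)

/-- The shift action restricted to `P^⊥`. -/
def shiftSub (p d : ℕ) (Φ : (Fin d → ℤ) →₀ ZMod p) (g : Fin d → ℤ)
    (x : PperpGroup p d Φ) : PperpGroup p d Φ :=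
  ⟨shift p d g x.1, shift_mem_Pperp p d Φ g x.2⟩

end LCA

open LCA


open Pointwise

namespace StmtAux


lemma toLex_add_le {d : ℕ} {a b : Fin d → ℤ} (c : Fin d → ℤ) (h : toLex a ≤ toLex b) :
    toLex (c + a) ≤ toLex (c + b) := by
  haveI : WellFoundedLT (Fin d) := inferInstance
  rcases eq_or_lt_of_le h with heq | hlt
  · rw [toLex_inj.mp heq]
  · obtain ⟨i, hb, hi⟩ := hlt
    refine le_of_lt ⟨i, fun j hj => ?_, ?_⟩
    · have : a j = b j := hb j hj
      show (c + a) j = (c + b) j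
      simp [this]
    · have : a i < b i := hi
      show (c + a) i < (c + b) i
      simpa using this


variable (p d : ℕ) (Φ : (Fin d → ℤ) →₀ ZMod p)
def Lop (x : Full p d) : Full p d := fun n => ∑ m ∈ Φ.support, Φ m * x (n + m)

lemma Lop_mem {x : Full p d} (hx : x ∈ Pperp p d Φ) : Lop p d Φ x ∈ Pperp p d Φ := by
  intro n
  show Lop p d Φ x (n + eLast d) = ∑ m ∈ Φ.support, Φ m * Lop p d Φ x (n + m)
  calc Lop p d Φ x (n + eLast d)
      = ∑ m ∈ Φ.support, Φ m * x ((n + m) + eLast d) := by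
        apply Finset.sum_congr rfl
        intro m _
        rw [show n + eLast d + m = n + m + eLast d by abel]
    _ = ∑ m ∈ Φ.support, Φ m * ∑ m' ∈ Φ.support, Φ m' * x ((n + m) + m') := by
        apply Finset.sum_congr rfl
        intro m _
        rw [hx (n + m)]
    _ = ∑ m ∈ Φ.support, ∑ m' ∈ Φ.support, Φ m * (Φ m' * x (n + m + m')) := by
        apply Finset.sum_congr rfl
        intro m _
        rw [Finset.mul_sum]
    _ = ∑ m' ∈ Φ.support, ∑ m ∈ Φ.support, Φ m * (Φ m' * x (n + m + m')) :=
        Finset.sum_comm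
    _ = ∑ m' ∈ Φ.support, Φ m' * Lop p d Φ x (n + m') := by
        apply Finset.sum_congr rfl
        intro m' _
        rw [Lop, Finset.mul_sum]
        apply Finset.sum_congr rfl
        intro m _
        rw [show n + m + m' = n + m' + m by abel]
        ring

lemma det {x : Full p d} (hx : x ∈ Pperp p d Φ) :
    ∀ (t : ℕ) (n : Fin d → ℤ), x (n + t • eLast d) = (Lop p d Φ)^[t] x n := by
  intro t
  induction t generalizing x hx with
  | zero => intro n; simp
  | succ t ih =>
    intro n
    have h1 : n + (t + 1) • eLast d = (n + t • eLast d) + eLast d := by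
      rw [succ_nsmul]; abel
    rw [h1, hx (n + t • eLast d)]
    show Lop p d Φ x (n + t • eLast d) = _
    rw [Function.iterate_succ_apply]
    exact ih (Lop_mem p d Φ hx) n


/-- Dependence sets: `Lop^[t] x n` only depends on `x` on `n + Dset t`. -/
def Dset : ℕ → Finset (Fin d → ℤ)
  | 0 => {0}
  | (t + 1) => Φ.support + Dset t

lemma Dset_zero : Dset p d Φ 0 = {0} := rfl

lemma Dset_succ (t : ℕ) : Dset p d Φ (t + 1) = Φ.support + Dset p d Φ t := rfl

lemma dep : ∀ (t : ℕ) (x y : Full p d) (n : Fin d → ℤ),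
    (∀ g ∈ Dset p d Φ t, x (n + g) = y (n + g)) →
    (Lop p d Φ)^[t] x n = (Lop p d Φ)^[t] y n := by
  intro t
  induction t with
  | zero =>
    intro x y n hxy
    have := hxy 0 (by simp [Dset_zero])
    simpa using this
  | succ t ih =>
    intro x y n hxy
    rw [Function.iterate_succ_apply, Function.iterate_succ_apply]
    apply ih
    intro g hg
    show Lop p d Φ x (n + g) = Lop p d Φ y (n + g)
    apply Finset.sum_congr rfl
    intro m hm
    have hmem : m + g ∈ Dset p d Φ (t + 1) := by
      rw [Dset_succ]
      exact Finset.add_mem_add hm hg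
    have := hxy (m + g) hmem
    rw [show n + g + m = n + (m + g) by abel, this]

lemma Dset_last (hd : 2 ≤ d) (hΦsupp : ∀ m ∈ Φ.support, m ⟨d - 1, Nat.sub_lt (by omega) Nat.one_pos⟩ = 0) :
    ∀ (t : ℕ), ∀ g ∈ Dset p d Φ t, g ⟨d - 1, Nat.sub_lt (by omega) Nat.one_pos⟩ = 0 := by
  intro t
  induction t with
  | zero =>
    intro g hg
    rw [Dset_zero, Finset.mem_singleton] at hg
    simp [hg]
  | succ t ih =>
    intro g hg
    rw [Dset_succ] at hg
    obtain ⟨m, hm, g', hg', rfl⟩ := Finset.mem_add.mp hg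
    have : (m + g') ⟨d - 1, by omega⟩ = m ⟨d - 1, by omega⟩ + g' ⟨d - 1, by omega⟩ := rfl
    rw [this, hΦsupp m hm, ih g' hg', add_zero]

lemma Lop_iter_zero : ∀ t : ℕ, (Lop p d Φ)^[t] (0 : Full p d) = 0 := by
  intro t
  induction t with
  | zero => rfl
  | succ t ih =>
    rw [Function.iterate_succ_apply]
    have : Lop p d Φ (0 : Full p d) = 0 := by
      funext n; simp [Lop]
    rw [this, ih]

lemma Lop_add (x y : Full p d) : Lop p d Φ (x + y) = Lop p d Φ x + Lop p d Φ y := by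
  funext n
  simp [Lop, mul_add, Finset.sum_add_distrib]

lemma Lop_iter_sum {α : Type*} (t : ℕ) (s : Finset α) (F : α → Full p d) :
    (Lop p d Φ)^[t] (∑ j ∈ s, F j) = ∑ j ∈ s, (Lop p d Φ)^[t] (F j) := by
  classical
  induction s using Finset.induction_on with
  | empty => simp [Lop_iter_zero]
  | insert _ _ hj ih =>
    rw [Finset.sum_insert hj, Finset.sum_insert hj, ← ih]
    -- reduce to additivity of the iterate
    clear hj ih
    induction t with
    | zero => rfl
    | succ t iht =>
      rw [Function.iterate_succ_apply', Function.iterate_succ_apply',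
        Function.iterate_succ_apply', iht, Lop_add]

lemma Lop_shift (g : Fin d → ℤ) (x : Full p d) :
    Lop p d Φ (shift p d g x) = shift p d g (Lop p d Φ x) := by
  funext w
  show ∑ m ∈ Φ.support, Φ m * x (w + m + g) = ∑ m ∈ Φ.support, Φ m * x (w + g + m)
  apply Finset.sum_congr rfl
  intro m _
  rw [show w + m + g = w + g + m by abel]

lemma Lop_iter_shift (t : ℕ) (g : Fin d → ℤ) (x : Full p d) (n : Fin d → ℤ) :
    (Lop p d Φ)^[t] (shift p d g x) n = (Lop p d Φ)^[t] x (n + g) := by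
  induction t generalizing x with
  | zero => rfl
  | succ t ih =>
    rw [Function.iterate_succ_apply, Function.iterate_succ_apply, Lop_shift, ih]


/-- Forward extension of slab data. -/
def fwd (f : Full p d) : ℕ → Full p d
  | 0 => f
  | (t + 1) => fun n => Lop p d Φ (fwd f t) (n - eLast d)

/-- Backward extension of slab data via a choice of preimages. -/
def bwd (B : Full p d → Full p d) (f : Full p d) : ℕ → Full p d
  | 0 => f
  | (t + 1) => B (bwd B f t)

lemma Lop_finite_surj [Fact p.Prime] (hne : Φ.support.Nonempty)
    (N : Finset (Fin d → ℤ)) (h : Full p d) :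
    ∃ f : Full p d, ∀ n ∈ N, Lop p d Φ f n = h n := by
  classical
  haveI : WellFoundedLT (Fin d) := inferInstance
  obtain ⟨g0, hg0s, hg0max⟩ := Finset.exists_max_image Φ.support
    (fun g => (toLex g : Lex (Fin d → ℤ))) hne
  induction N using Finset.strongInduction with
  | _ N ih =>
    rcases N.eq_empty_or_nonempty with rfl | hN
    · exact ⟨0, by simp⟩
    obtain ⟨n0, hn0N, hn0max⟩ := Finset.exists_max_image N
      (fun g => (toLex g : Lex (Fin d → ℤ))) hN
    obtain ⟨f', hf'⟩ := ih (N.erase n0) (Finset.erase_ssubset hn0N)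
    set c : ZMod p := (Φ g0)⁻¹ * (h n0 - Lop p d Φ f' n0) with hc
    refine ⟨fun w => f' w + if w = n0 + g0 then c else 0, ?_⟩
    have hexp : ∀ n, Lop p d Φ (fun w => f' w + if w = n0 + g0 then c else 0) n
        = Lop p d Φ f' n + ∑ m ∈ Φ.support, Φ m * (if n + m = n0 + g0 then c else 0) := by
      intro n
      simp only [Lop, mul_add, Finset.sum_add_distrib]
    intro n hnN
    rcases eq_or_ne n n0 with rfl | hne'
    · rw [hexp]
      have hsum : ∑ m ∈ Φ.support, Φ m * (if n + m = n + g0 then c else 0) = Φ g0 * c := by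
        rw [Finset.sum_eq_single g0]
        · simp
        · intro m hm hmne
          have : ¬ (n + m = n + g0) := fun hh => hmne (by
            have := add_left_cancel hh; exact this)
          simp [this]
        · intro habs; exact absurd hg0s habs
      rw [hsum, hc]
      have hΦg0 : Φ g0 ≠ 0 := Finsupp.mem_support_iff.mp hg0s
      rw [mul_inv_cancel_left₀ hΦg0]
      ring
    · rw [hexp]
      have hsum : ∑ m ∈ Φ.support, Φ m * (if n + m = n0 + g0 then c else 0) = 0 := by
        apply Finset.sum_eq_zero
        intro m hm
        have : ¬ (n + m = n0 + g0) := by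
          intro hh
          -- show n = n0, contradiction
          have h1 : toLex (n - g0 + m) ≤ toLex (n - g0 + g0) :=
            toLex_add_le _ (hg0max m hm)
          have h2 : n - g0 + m = n0 := by
            have : n + m - g0 = n0 := by rw [hh]; abel
            rw [← this]; abel
          have h3 : n - g0 + g0 = n := by abel
          rw [h2, h3] at h1
          have h4 : toLex n ≤ toLex n0 := hn0max n hnN
          have : n = n0 := toLex_inj.mp (le_antisymm h4 h1)
          exact hne' this
        simp [this]
      rw [hsum, add_zero]
      exact hf' n (Finset.mem_erase.mpr ⟨hne', hnN⟩)


lemma Lop_surj [Fact p.Prime] (hne : Φ.support.Nonempty) (h : Full p d) :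
    ∃ f : Full p d, ∀ n, Lop p d Φ f n = h n := by
  classical
  letI : TopologicalSpace (ZMod p) := ⊥
  haveI : DiscreteTopology (ZMod p) := ⟨rfl⟩
  haveI : Finite (ZMod p) := by
    haveI : NeZero p := ⟨(Fact.out : p.Prime).ne_zero⟩
    infer_instance
  haveI : CompactSpace (Full p d) := by infer_instance
  set A : (Fin d → ℤ) → Set (Full p d) := fun n => {f | Lop p d Φ f n = h n} with hA
  have hclosed : ∀ n, IsClosed (A n) := by
    intro n
    have hcont : Continuous fun f : Full p d => Lop p d Φ f n := by
      apply continuous_finset_sum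
      intro m _
      exact continuous_const.mul (continuous_apply (n + m))
    have : A n = (fun f : Full p d => Lop p d Φ f n) ⁻¹' {h n} := rfl
    rw [this]
    exact (isClosed_singleton).preimage hcont
  by_contra hcon
  push_neg at hcon
  have hemp : (Set.univ ∩ ⋂ n, A n) = ∅ := by
    rw [Set.univ_inter]
    ext f
    simp only [Set.mem_iInter, Set.mem_empty_iff_false, iff_false]
    intro hf
    obtain ⟨n, hn⟩ := hcon f
    exact hn (hf n)
  obtain ⟨u, hu⟩ := IsCompact.elim_finite_subfamily_closed isCompact_univ A hclosed hemp
  obtain ⟨f, hf⟩ := Lop_finite_surj p d Φ hne u h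
  have : f ∈ Set.univ ∩ ⋂ n ∈ u, A n := by
    refine ⟨trivial, ?_⟩
    simp only [Set.mem_iInter]
    intro n hn
    exact hf n hn
  rw [hu] at this
  exact this

lemma ext_lemma [Fact p.Prime] (hd : 2 ≤ d)
    (hΦsupp : ∀ m ∈ Φ.support, m ⟨d - 1, Nat.sub_lt (by omega) Nat.one_pos⟩ = 0)
    (hne : Φ.support.Nonempty) (a : ℤ) (f : Full p d) :
    ∃ x ∈ Pperp p d Φ, ∀ w : Fin d → ℤ, w ⟨d - 1, Nat.sub_lt (by omega) Nat.one_pos⟩ = a → x w = f w := by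
  classical
  set idx : Fin d := ⟨d - 1, by omega⟩ with hidx
  have hτe : eLast d idx = 1 := by simp [eLast, hidx]
  have hτm : ∀ m ∈ Φ.support, m idx = 0 := hΦsupp
  -- choice of one-step backward solutions
  have hBex : ∀ h : Full p d, ∃ g : Full p d, ∀ n, Lop p d Φ g n = h (n + eLast d) := by
    intro h
    exact Lop_surj p d Φ hne (shift p d (eLast d) h)
  choose B hB using hBex
  set u : ℕ → Full p d := fwd p d Φ f with hu
  set v : ℕ → Full p d := bwd p d B f with hv
  set x : Full p d := fun w => if a ≤ w idx then u (w idx - a).toNat w else v (a - w idx).toNat w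
    with hxdef
  have hxval : ∀ w : Fin d → ℤ,
      x w = if a ≤ w idx then u (w idx - a).toNat w else v (a - w idx).toNat w := fun w => rfl
  refine ⟨x, ?_, ?_⟩
  · intro n
    have hne_idx : (n + eLast d) idx = n idx + 1 := by
      show n idx + eLast d idx = n idx + 1
      rw [hτe]
    have hnm_idx : ∀ m ∈ Φ.support, (n + m) idx = n idx := by
      intro m hm
      show n idx + m idx = n idx
      rw [hτm m hm, add_zero]
    set t : ℤ := n idx with ht
    have hrhs_branch : ∑ m ∈ Φ.support, Φ m * x (n + m)
        = if a ≤ t then ∑ m ∈ Φ.support, Φ m * u (t - a).toNat (n + m)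
          else ∑ m ∈ Φ.support, Φ m * v (a - t).toNat (n + m) := by
      by_cases hat : a ≤ t
      · rw [if_pos hat]
        apply Finset.sum_congr rfl
        intro m hm
        rw [hxval (n + m), hnm_idx m hm, if_pos hat]
      · rw [if_neg hat]
        apply Finset.sum_congr rfl
        intro m hm
        rw [hxval (n + m), hnm_idx m hm, if_neg hat]
    by_cases hat : a ≤ t
    · -- forward region
      have hL : x (n + eLast d) = u ((t + 1) - a).toNat (n + eLast d) := by
        rw [hxval (n + eLast d), hne_idx, if_pos (by omega : a ≤ t + 1)]
      have hk : ((t + 1) - a).toNat = (t - a).toNat + 1 := by omega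
      rw [hL, hk]
      show Lop p d Φ (u (t - a).toNat) (n + eLast d - eLast d) = _
      rw [show n + eLast d - eLast d = n by abel, hrhs_branch, if_pos hat]
      rfl
    · -- backward region
      have hkk : (a - t).toNat = (a - 1 - t).toNat + 1 := by omega
      have hRHS : ∑ m ∈ Φ.support, Φ m * x (n + m) = v ((a - 1 - t).toNat) (n + eLast d) := by
        rw [hrhs_branch, if_neg hat, hkk]
        show Lop p d Φ (B (v ((a - 1 - t).toNat))) n = _
        rw [hB (v ((a - 1 - t).toNat)) n]
      rw [hRHS, hxval (n + eLast d), hne_idx]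
      by_cases hta : a ≤ t + 1
      · rw [if_pos hta]
        have h1 : (t + 1 - a).toNat = 0 := by omega
        have h2 : (a - 1 - t).toNat = 0 := by omega
        rw [h1, h2]
        rfl
      · rw [if_neg hta]
        congr 1
        omega
  · intro w hw
    rw [hxval w, hw, if_pos le_rfl, sub_self]
    rfl

end StmtAux

open StmtAux

/-- Let `P^⊥` be the linear cellular automaton shift determined by `Φ`.
Let `n_1,…,n_k ∈ ℤ^d` be pairwise distinct with last coordinate `0`, let `S ⊂ ℤ^d` be a
finite set, and let `C_1,…,C_k : S → 𝔽_p` be configurations each occurring in `P^⊥`.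
Then there exist `x ∈ P^⊥` and `m ∈ ℕ` such that `x(p^m·n_i + s) = C_i(s)` for all `i`
and all `s ∈ S`. -/
theorem scaled_configurations_occur (p d : ℕ) [Fact p.Prime] (hd : 2 ≤ d)
    (Φ : (Fin d → ℤ) →₀ ZMod p)
    (hΦsupp : ∀ m ∈ Φ.support, m ⟨d - 1, by omega⟩ = 0)
    (hΦ2 : 2 ≤ Φ.support.card)
    (k : ℕ) (ns : Fin k → (Fin d → ℤ)) (hinj : Function.Injective ns)
    (hlast : ∀ i, ns i ⟨d - 1, by omega⟩ = 0)
    (S : Finset (Fin d → ℤ)) (C : Fin k → (Fin d → ℤ) → ZMod p)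
    (hC : ∀ i, ∃ y ∈ Pperp p d Φ, ∀ s ∈ S, y s = C i s) :
    ∃ x ∈ Pperp p d Φ, ∃ m : ℕ,
      ∀ i : Fin k, ∀ s ∈ S, x ((p ^ m : ℕ) • ns i + s) = C i s := by
  classical
  have hp2 : 2 ≤ p := (Fact.out : p.Prime).two_le
  have hΦne : Φ.support.Nonempty := Finset.card_pos.mp (by omega)
  choose y hy hyS using hC
  by_cases hS : S.Nonempty
  swap
  · refine ⟨0, fun n => by simp, 0, fun i s hs => absurd ⟨s, hs⟩ hS⟩
  set idx : Fin d := ⟨d - 1, by omega⟩ with hidx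
  set e : Fin d → ℤ := eLast d with he
  have hτe : e idx = 1 := by simp [he, eLast, hidx]
  have hSne : (S.image (fun w => w idx)).Nonempty := hS.image _
  set a : ℤ := (S.image (fun w => w idx)).min' hSne with ha
  have haS : ∀ s ∈ S, a ≤ s idx := fun s hs =>
    Finset.min'_le _ _ (Finset.mem_image_of_mem _ hs)
  set tt : (Fin d → ℤ) → ℕ := fun s => (s idx - a).toNat with htt
  have httz : ∀ s ∈ S, (tt s : ℤ) = s idx - a := by
    intro s hs
    exact Int.toNat_of_nonneg (sub_nonneg.mpr (haS s hs))
  set R : Finset (Fin d → ℤ) :=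
    S.biUnion (fun s => (Dset p d Φ (tt s)).image (fun g => (s - (tt s) • e) + g)) with hR
  set fC : Fin k → Full p d := fun j w => if w ∈ R then y j w else 0 with hfC
  -- the patches are reproduced by the truncated slab data
  have key1 : ∀ j : Fin k, ∀ s ∈ S,
      (Lop p d Φ)^[tt s] (fC j) (s - (tt s) • e) = C j s := by
    intro j s hs
    have h1 : ∀ g ∈ Dset p d Φ (tt s),
        fC j ((s - (tt s) • e) + g) = y j ((s - (tt s) • e) + g) := by
      intro g hg
      have hmem : (s - (tt s) • e) + g ∈ R := by
        rw [hR]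
        exact Finset.mem_biUnion.mpr ⟨s, hs, Finset.mem_image.mpr ⟨g, hg, rfl⟩⟩
      simp only [hfC, if_pos hmem]
    calc (Lop p d Φ)^[tt s] (fC j) (s - (tt s) • e)
        = (Lop p d Φ)^[tt s] (y j) (s - (tt s) • e) := dep p d Φ (tt s) _ _ _ h1
      _ = y j ((s - (tt s) • e) + (tt s) • e) := (det p d Φ (hy j) (tt s) _).symm
      _ = y j s := by rw [sub_add_cancel]
      _ = C j s := hyS j s hs
  -- far away the truncated slab data vanishes
  have key0 : ∀ (j : Fin k) (t : ℕ) (q : Fin d → ℤ),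
      (∀ g ∈ Dset p d Φ t, q + g ∉ R) → (Lop p d Φ)^[t] (fC j) q = 0 := by
    intro j t q hq
    have h1 : ∀ g ∈ Dset p d Φ t, fC j (q + g) = (0 : Full p d) (q + g) := by
      intro g hg
      simp only [hfC, if_neg (hq g hg), Pi.zero_apply]
    rw [dep p d Φ t _ _ _ h1, Lop_iter_zero]
    rfl
  -- choice of the scale
  set V : Finset (Fin d → ℤ) := R.biUnion (fun r => S.biUnion (fun s =>
    (Dset p d Φ (tt s)).image (fun g => r - s + (tt s) • e - g))) with hV
  set Bnd : ℕ := V.sup (fun v => Finset.univ.sup (fun c => (v c).natAbs)) with hBnd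
  set mm : ℕ := Bnd + 1 with hmm
  have hpm : Bnd < p ^ mm := by
    have h1 : Bnd < 2 ^ Bnd := Nat.lt_two_pow_self
    have h2 : 2 ^ Bnd ≤ 2 ^ mm := Nat.pow_le_pow_right (by norm_num) (Nat.le_succ Bnd)
    have h3 : (2 : ℕ) ^ mm ≤ p ^ mm := Nat.pow_le_pow_left hp2 mm
    exact lt_of_lt_of_le (lt_of_lt_of_le h1 h2) h3
  have hsep : ∀ u : Fin d → ℤ, u ≠ 0 → ∀ s ∈ S, ∀ g ∈ Dset p d Φ (tt s),
      ((s - (tt s) • e + (p ^ mm : ℕ) • u) + g) ∉ R := by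
    intro u hu s hs g hg hmemR
    have hvV : (s - (tt s) • e + (p ^ mm : ℕ) • u + g) - s + (tt s) • e - g ∈ V := by
      rw [hV]
      refine Finset.mem_biUnion.mpr ⟨_, hmemR, ?_⟩
      exact Finset.mem_biUnion.mpr ⟨s, hs, Finset.mem_image.mpr ⟨g, hg, rfl⟩⟩
    have heq2 : (s - (tt s) • e + (p ^ mm : ℕ) • u + g) - s + (tt s) • e - g
        = (p ^ mm : ℕ) • u := by abel
    rw [heq2] at hvV
    obtain ⟨c, hc⟩ := Function.ne_iff.mp hu
    have hc' : u c ≠ 0 := hc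
    have h2 : (((p ^ mm : ℕ) • u) c).natAbs ≤ Bnd := by
      calc (((p ^ mm : ℕ) • u) c).natAbs
          ≤ Finset.univ.sup (fun c' => ((((p ^ mm : ℕ) • u)) c').natAbs) :=
            Finset.le_sup (f := fun c' => ((((p ^ mm : ℕ) • u)) c').natAbs)
              (Finset.mem_univ c)
        _ ≤ Bnd :=
            Finset.le_sup (f := fun v => Finset.univ.sup fun c' => (v c').natAbs) hvV
    have h3 : (((p ^ mm : ℕ) • u) c).natAbs = p ^ mm * (u c).natAbs := by
      have hh : ((p ^ mm : ℕ) • u) c = ((p ^ mm : ℕ) : ℤ) * u c := by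
        simp [Pi.smul_apply, nsmul_eq_mul]
      rw [hh, Int.natAbs_mul, Int.natAbs_natCast]
    have h4 : 0 < (u c).natAbs := Int.natAbs_pos.mpr hc'
    have h5 : p ^ mm ≤ p ^ mm * (u c).natAbs := Nat.le_mul_of_pos_right _ h4
    have h6 : p ^ mm ≤ Bnd := le_trans (by rw [h3]; exact h5) h2
    exact absurd h6 (not_le.mpr hpm)
  -- assemble the global slab data and extend it to a point of the shift
  set F : Full p d := ∑ j : Fin k, shift p d (-((p ^ mm : ℕ) • ns j)) (fC j) with hF
  obtain ⟨x, hxmem, hxslab⟩ := ext_lemma p d Φ hd hΦsupp hΦne a F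
  refine ⟨x, hxmem, mm, ?_⟩
  intro i s hs
  set t : ℕ := tt s with htdef
  set q : Fin d → ℤ := (p ^ mm : ℕ) • ns i + s - t • e with hq
  have hq1 : q + t • e = (p ^ mm : ℕ) • ns i + s := by rw [hq, sub_add_cancel]
  have hgoal : x ((p ^ mm : ℕ) • ns i + s) = (Lop p d Φ)^[t] x q := by
    rw [← hq1]
    exact det p d Φ hxmem t q
  have hτq : q idx = a := by
    have h1 : ((p ^ mm : ℕ) • ns i) idx = 0 := by
      have : ((p ^ mm : ℕ) • ns i) idx = ((p ^ mm : ℕ) : ℤ) * (ns i idx) := by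
        simp [Pi.smul_apply, nsmul_eq_mul]
      rw [this, hlast i, mul_zero]
    have h2 : (t • e) idx = (t : ℤ) := by
      have : (t • e) idx = (t : ℤ) * e idx := by
        simp [Pi.smul_apply, nsmul_eq_mul]
      rw [this, hτe, mul_one]
    have h3 : q idx = ((p ^ mm : ℕ) • ns i) idx + s idx - (t • e) idx := rfl
    have h4 : (t : ℤ) = s idx - a := httz s hs
    rw [h3, h1, h2, zero_add, h4]
    ring
  have hxF : ∀ g ∈ Dset p d Φ t, x (q + g) = F (q + g) := by
    intro g hg
    apply hxslab
    have hgidx : g idx = 0 := Dset_last p d Φ hd hΦsupp t g hg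
    show q idx + g idx = a
    rw [hτq, hgidx, add_zero]
  have hxq : (Lop p d Φ)^[t] x q = (Lop p d Φ)^[t] F q := dep p d Φ t x F q hxF
  have hFsum : (Lop p d Φ)^[t] F q
      = ∑ j : Fin k, (Lop p d Φ)^[t] (fC j) (q + -((p ^ mm : ℕ) • ns j)) := by
    rw [hF, Lop_iter_sum]
    rw [Finset.sum_apply]
    apply Finset.sum_congr rfl
    intro j _
    exact Lop_iter_shift p d Φ t _ (fC j) q
  have hterm_i : (Lop p d Φ)^[t] (fC i) (q + -((p ^ mm : ℕ) • ns i)) = C i s := by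
    have : q + -((p ^ mm : ℕ) • ns i) = s - t • e := by rw [hq]; abel
    rw [this]
    exact key1 i s hs
  have hterm_ne : ∀ j : Fin k, j ≠ i →
      (Lop p d Φ)^[t] (fC j) (q + -((p ^ mm : ℕ) • ns j)) = 0 := by
    intro j hji
    have hu : ns i - ns j ≠ 0 := sub_ne_zero.mpr (fun hh => hji (hinj hh).symm)
    have hpt : q + -((p ^ mm : ℕ) • ns j) = s - t • e + (p ^ mm : ℕ) • (ns i - ns j) := by
      rw [hq, smul_sub]
      abel
    rw [hpt]
    apply key0
    intro g hg
    exact hsep (ns i - ns j) hu s hs g hg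
  rw [hgoal, hxq, hFsum, Finset.sum_eq_single i (fun j _ hji => hterm_ne j hji)
    (fun habs => absurd (Finset.mem_univ i) habs), hterm_i]
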